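/- The List monad on Set, equipped with the constant given by the empty list, is not exceptional: the map List + 1 → List sending the extra point to the empty list is not a morphism of monads (multiplication is not preserved). -/

import Mathlib

/-- The functor `List + 1`, i.e. `X ↦ List X + 1`. -/
def ListPlus (X : Type) : Type := List X ⊕ PUnit

/-- The retraction `List + 1 → List` sending the extra point to the empty list. -/
def ξ (X : Type) : ListPlus X → List X := Sum.elim id (fun _ => [])

/-- Flatten a list of `List + 1` values with exception semantics: if any entry is
the extra point, the result is the extra point; otherwise concatenate. -/
def seqL {X : Type} : List (ListPlus X) → ListPlus X :=
  fun l => l.foldr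
    (fun a acc =>
      match a, acc with
      | Sum.inl l₁, Sum.inl l₂ => Sum.inl (l₁ ++ l₂)
      | _, _ => Sum.inr PUnit.unit)
    (Sum.inl [])

/-- Multiplication of the `List + 1` monad, with exception semantics. -/
def ListPlus.μ (X : Type) : ListPlus (ListPlus X) → ListPlus X :=
  Sum.elim seqL (fun _ => Sum.inr PUnit.unit)

/-- The List monad with the empty-list constant is not exceptional: the retraction
`ξ : List + 1 → List` sending the extra point to the empty list does not preserve
multiplication (where the List monad multiplication is concatenation/join). -/
theorem list_not_exceptional :
    ¬ ∀ (X : Type) (z : ListPlus (ListPlus X)),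
        ξ X (ListPlus.μ X z) = List.flatten (List.map (ξ X) (ξ (ListPlus X) z)) := by
  intro h
  have := h Nat (Sum.inl [Sum.inr PUnit.unit, Sum.inl [1]])
  simp [ξ, ListPlus.μ, seqL] at this
  revert this
  decide
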